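/- Every locally two-distance set in ℝ^d contains at most binom(d+2, 2) points; that is, LDS_d(2) ≤ (d+2)(d+1)/2. -/

import Mathlib

open scoped Classical

/-- `A_X(x)`: the set of distances from `x` to the other points of `X`. -/
noncomputable def distancesFrom {d : ℕ} (X : Finset (EuclideanSpace ℝ (Fin d)))
    (x : EuclideanSpace ℝ (Fin d)) : Finset ℝ :=
  (X.erase x).image (fun y => dist x y)

open Polynomial in
private lemma quad_coeff4 (A B c c' : ℝ) :
    ((C A * X ^ 2 - C B * X + C c) * (C A * X ^ 2 - C B * X + C c') : ℝ[X]).coeff 4 = A * A := by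
  have h : ((C A * X ^ 2 - C B * X + C c) * (C A * X ^ 2 - C B * X + C c') : ℝ[X])
      = C A * C A * X ^ 4 - C A * C B * X ^ 3 - C B * C A * X ^ 3
        + C A * C c' * X ^ 2 + C c * C A * X ^ 2 + C B * C B * X ^ 2
        - C B * C c' * X - C c * C B * X + C c * C c' := by ring
  rw [h]
  simp only [← C_mul, coeff_add, coeff_sub, coeff_C_mul, coeff_X_pow, coeff_X, coeff_C]
  norm_num

open Polynomial in
private lemma quad_coeff3 (A B c c' : ℝ) :
    ((C A * X ^ 2 - C B * X + C c) * (C A * X ^ 2 - C B * X + C c') : ℝ[X]).coeff 3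
      = -(2 * (A * B)) := by
  have h : ((C A * X ^ 2 - C B * X + C c) * (C A * X ^ 2 - C B * X + C c') : ℝ[X])
      = C A * C A * X ^ 4 - C A * C B * X ^ 3 - C B * C A * X ^ 3
        + C A * C c' * X ^ 2 + C c * C A * X ^ 2 + C B * C B * X ^ 2
        - C B * C c' * X - C c * C B * X + C c * C c' := by ring
  rw [h]
  simp only [← C_mul, coeff_add, coeff_sub, coeff_C_mul, coeff_X_pow, coeff_X, coeff_C]
  norm_num
  ring

/-- Every locally two-distance set in `ℝ^d` has at most `binom(d+2, 2)` points. -/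
theorem stmt4 (d : ℕ) (X : Finset (EuclideanSpace ℝ (Fin d)))
    (hloc : ∀ x ∈ X, (distancesFrom X x).card ≤ 2) :
    X.card ≤ (d + 2).choose 2 := by
  classical
  by_cases hsmall : X.card ≤ 1
  · have : 0 < (d + 2).choose 2 := Nat.choose_pos (by omega)
    omega
  rcases Nat.eq_zero_or_pos d with hd0 | hd0
  · subst hd0
    have hsub : ∀ x y : EuclideanSpace ℝ (Fin 0), x = y := fun x y => by ext i; exact i.elim0
    have : X.card ≤ 1 := Finset.card_le_one.2 fun a _ b _ => hsub a b
    omega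
  push_neg at hsmall
  -- choose the (at most two) distances from each point
  have hex : ∀ x : ↥X, ∃ p : ℝ × ℝ, 0 < p.1 ∧ 0 < p.2 ∧
      ∀ y : ↥X, y ≠ x → dist (x : EuclideanSpace ℝ (Fin d)) (y : EuclideanSpace ℝ (Fin d)) = p.1 ∨
        dist (x : EuclideanSpace ℝ (Fin d)) (y : EuclideanSpace ℝ (Fin d)) = p.2 := by
    intro x
    have hmem : ∀ y : ↥X, y ≠ x →
        dist (x : EuclideanSpace ℝ (Fin d)) (y : EuclideanSpace ℝ (Fin d)) ∈ distancesFrom X x.1 :=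
      fun y hy => Finset.mem_image.2
        ⟨y.1, Finset.mem_erase.2 ⟨Subtype.coe_injective.ne hy, y.2⟩, rfl⟩
    have hpos : ∀ r ∈ distancesFrom X x.1, 0 < r := by
      intro r hr
      obtain ⟨y, hy, rfl⟩ := Finset.mem_image.1 hr
      exact dist_pos.2 (Ne.symm (Finset.mem_erase.1 hy).1)
    have hne : (distancesFrom X x.1).Nonempty := by
      obtain ⟨y, hyX, hyx⟩ := Finset.exists_mem_ne hsmall x.1
      exact ⟨dist x.1 y, Finset.mem_image.2 ⟨y, Finset.mem_erase.2 ⟨hyx, hyX⟩, rfl⟩⟩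
    rcases lt_or_ge (distancesFrom X x.1).card 2 with h | h
    · have h1 : (distancesFrom X x.1).card = 1 := by
        have := Finset.card_pos.2 hne; omega
      obtain ⟨r, hr⟩ := Finset.card_eq_one.1 h1
      refine ⟨(r, r), hpos r (by rw [hr]; exact Finset.mem_singleton_self r), hpos r (by
        rw [hr]; exact Finset.mem_singleton_self r), ?_⟩
      intro y hy
      have := hmem y hy
      rw [hr] at this
      exact Or.inl (Finset.mem_singleton.1 this)
    · have h2 : (distancesFrom X x.1).card = 2 := le_antisymm (hloc x.1 x.2) h
      obtain ⟨r, s, hrs, hpair⟩ := Finset.card_eq_two.1 h2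
      refine ⟨(r, s), hpos r (by rw [hpair]; simp), hpos s (by rw [hpair]; simp), ?_⟩
      intro y hy
      have := hmem y hy
      rw [hpair] at this
      rcases Finset.mem_insert.1 this with h' | h'
      · exact Or.inl h'
      · exact Or.inr (Finset.mem_singleton.1 h')
  choose p hp1 hp2 hp3 using hex
  set a : ↥X → ℝ := fun x => (p x).1 with ha
  set b : ↥X → ℝ := fun x => (p x).2 with hb
  -- the quartic polynomials
  set F : ↥X → EuclideanSpace ℝ (Fin d) → ℝ := fun x y =>
    (‖y - x.1‖ ^ 2 - a x ^ 2) * (‖y - x.1‖ ^ 2 - b x ^ 2) with hF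
  have hF0 : ∀ x y : ↥X, y ≠ x → F x y.1 = 0 := by
    intro x y hy
    have hnorm : ‖(y.1 : EuclideanSpace ℝ (Fin d)) - x.1‖ = dist x.1 y.1 := by
      rw [dist_eq_norm, norm_sub_rev]
    rcases hp3 x y hy with h | h <;> simp [hF, ha, hb, hnorm, h]
  have hFpos : ∀ x : ↥X, 0 < F x x.1 := by
    intro x
    have h1 : (x.1 : EuclideanSpace ℝ (Fin d)) - x.1 = 0 := sub_self _
    simp only [hF, h1, norm_zero]
    nlinarith [pow_pos (hp1 x) 2, pow_pos (hp2 x) 2]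
  -- the family of functions
  set v : ↥X ⊕ Fin (d + 1) → (EuclideanSpace ℝ (Fin d) → ℝ) := fun i =>
    Sum.elim F (fun j => Fin.cases (fun _ => (1 : ℝ)) (fun i y => y i) j) i with hv
  have hind : LinearIndependent ℝ v := by
    rw [Fintype.linearIndependent_iff]
    intro c hc
    set lam : ↥X → ℝ := fun x => c (Sum.inl x) with hlam
    set mu : Fin d → ℝ := fun i => c (Sum.inr i.succ) with hmu
    have hS : ∀ y : EuclideanSpace ℝ (Fin d),
        (∑ x : ↥X, lam x * F x y) + (c (Sum.inr 0) + ∑ i : Fin d, mu i * y i) = 0 := by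
      intro y
      have h0 := congrFun hc y
      simp only [Finset.sum_apply, Pi.smul_apply, smul_eq_mul, Pi.zero_apply] at h0
      rw [Fintype.sum_sum_type, Fin.sum_univ_succ] at h0
      simpa [hv, hlam, hmu] using h0
    -- Step A : coefficient extraction
    have hcoeff : ∀ u : EuclideanSpace ℝ (Fin d),
        ((∑ x : ↥X, lam x) * (‖u‖ ^ 2 * ‖u‖ ^ 2) = 0) ∧
        (∑ x : ↥X, lam x * (‖u‖ ^ 2 * (inner ℝ x.1 u : ℝ)) = 0) := by
      intro u
      set P : Polynomial ℝ :=
        (∑ x : ↥X, Polynomial.C (lam x) *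
          ((Polynomial.C (‖u‖ ^ 2) * Polynomial.X ^ 2
              - Polynomial.C (2 * (inner ℝ x.1 u : ℝ)) * Polynomial.X
              + Polynomial.C (‖x.1‖ ^ 2 - a x ^ 2)) *
           (Polynomial.C (‖u‖ ^ 2) * Polynomial.X ^ 2
              - Polynomial.C (2 * (inner ℝ x.1 u : ℝ)) * Polynomial.X
              + Polynomial.C (‖x.1‖ ^ 2 - b x ^ 2))))
        + (Polynomial.C (c (Sum.inr 0)) + ∑ i : Fin d, Polynomial.C (mu i * u i) * Polynomial.X)
        with hPdef
      have hPeval : ∀ s : ℝ, P.eval s = 0 := by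
        intro s
        have hkey := hS (s • u)
        rw [hPdef]
        simp only [Polynomial.eval_add, Polynomial.eval_sub, Polynomial.eval_mul,
          Polynomial.eval_pow, Polynomial.eval_C, Polynomial.eval_X, Polynomial.eval_finset_sum]
        rw [← hkey]
        congr 1
        · apply Finset.sum_congr rfl
          intro x _
          have hn : ‖s • u - x.1‖ ^ 2
              = ‖u‖ ^ 2 * s ^ 2 - 2 * (inner ℝ x.1 u : ℝ) * s + ‖x.1‖ ^ 2 := by
            rw [norm_sub_sq_real, norm_smul, real_inner_smul_left, real_inner_comm]
            rw [mul_pow, Real.norm_eq_abs, sq_abs]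
            ring
          simp only [hF, hn]
          ring
        · congr 1
          apply Finset.sum_congr rfl
          intro i _
          have hyi : (s • u) i = s * u i := rfl
          rw [hyi]; ring
      have hP0 : P = 0 := Polynomial.funext (fun r => by rw [hPeval r, Polynomial.eval_zero])
      have htail4 : (Polynomial.C (c (Sum.inr 0))
          + ∑ i : Fin d, Polynomial.C (mu i * u i) * Polynomial.X).coeff 4 = 0 := by
        simp [Polynomial.finset_sum_coeff, Polynomial.coeff_C, Polynomial.coeff_X]
      have htail3 : (Polynomial.C (c (Sum.inr 0))
          + ∑ i : Fin d, Polynomial.C (mu i * u i) * Polynomial.X).coeff 3 = 0 := by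
        simp [Polynomial.finset_sum_coeff, Polynomial.coeff_C, Polynomial.coeff_X]
      constructor
      · have h4 := congrArg (fun q => Polynomial.coeff q 4) hP0
        simp only [Polynomial.coeff_zero] at h4
        rw [hPdef, Polynomial.coeff_add, htail4, add_zero, Polynomial.finset_sum_coeff] at h4
        simp only [Polynomial.coeff_C_mul, quad_coeff4] at h4
        rw [← Finset.sum_mul] at h4
        exact h4
      · have h3 := congrArg (fun q => Polynomial.coeff q 3) hP0
        simp only [Polynomial.coeff_zero] at h3
        rw [hPdef, Polynomial.coeff_add, htail3, add_zero, Polynomial.finset_sum_coeff] at h3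
        simp only [Polynomial.coeff_C_mul, quad_coeff3] at h3
        have he : ∀ x : ↥X, lam x * -(2 * (‖u‖ ^ 2 * (2 * (inner ℝ x.1 u : ℝ))))
            = (-4) * (lam x * (‖u‖ ^ 2 * (inner ℝ x.1 u : ℝ))) := fun x => by ring
        rw [Finset.sum_congr rfl (fun x _ => he x), ← Finset.mul_sum] at h3
        linarith
    -- sum of the lambdas is zero
    have hsum0 : ∑ x : ↥X, lam x = 0 := by
      have hu : ‖EuclideanSpace.single (⟨0, hd0⟩ : Fin d) (1 : ℝ)‖ = 1 := by
        rw [EuclideanSpace.norm_single]; norm_num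
      have := (hcoeff (EuclideanSpace.single (⟨0, hd0⟩ : Fin d) (1 : ℝ))).1
      rw [hu] at this
      simpa using this
    -- the weighted sum of points is zero
    have hw : (∑ x : ↥X, lam x • (x.1 : EuclideanSpace ℝ (Fin d))) = 0 := by
      set w : EuclideanSpace ℝ (Fin d) := ∑ x : ↥X, lam x • (x.1 : EuclideanSpace ℝ (Fin d))
        with hwdef
      have h3 := (hcoeff w).2
      have hinner : ∑ x : ↥X, lam x * (inner ℝ x.1 w : ℝ) = (inner ℝ w w : ℝ) := by
        nth_rewrite 2 [hwdef]
        rw [sum_inner]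
        exact Finset.sum_congr rfl fun x _ => (real_inner_smul_left _ _ _).symm
      have e : ∑ x : ↥X, lam x * (‖w‖ ^ 2 * (inner ℝ x.1 w : ℝ))
          = ‖w‖ ^ 2 * ∑ x : ↥X, lam x * (inner ℝ x.1 w : ℝ) := by
        rw [Finset.mul_sum]
        exact Finset.sum_congr rfl fun x _ => by ring
      rw [e, hinner, real_inner_self_eq_norm_sq] at h3
      have h2 : ‖w‖ ^ 2 = 0 := mul_self_eq_zero.1 h3
      have : ‖w‖ = 0 := (pow_eq_zero_iff two_ne_zero).1 h2
      exact norm_eq_zero.1 this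
    have hw_i : ∀ i : Fin d, ∑ x : ↥X, lam x * (x.1 : EuclideanSpace ℝ (Fin d)) i = 0 := by
      intro i
      have h := congrArg (fun z : EuclideanSpace ℝ (Fin d) => z i) hw
      have h2 : (∑ x : ↥X, lam x • (x.1 : EuclideanSpace ℝ (Fin d))) i
          = ∑ x : ↥X, lam x * (x.1 : EuclideanSpace ℝ (Fin d)) i := by
        rw [WithLp.ofLp_sum, Finset.sum_apply]
        exact Finset.sum_congr rfl fun x _ => rfl
      simp only [h2] at h
      simpa using h
    -- Step B : evaluation at the points of X
    have hz : ∀ z : ↥X, lam z * F z z.1 + (c (Sum.inr 0) + ∑ i : Fin d, mu i * z.1 i) = 0 := by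
      intro z
      have h0 := hS z.1
      rwa [Finset.sum_eq_single_of_mem z (Finset.mem_univ z)
        (fun x _ hxz => by rw [hF0 x z (Ne.symm hxz), mul_zero])] at h0
    have hsumsq : ∑ z : ↥X, lam z ^ 2 * F z z.1 = 0 := by
      have h1 : ∀ z : ↥X, lam z ^ 2 * F z z.1
          = -(lam z * c (Sum.inr 0)) - ∑ i : Fin d, mu i * (lam z * z.1 i) := by
        intro z
        have h2 := hz z
        have h4 : ∑ i : Fin d, mu i * (lam z * z.1 i)
            = lam z * ∑ i : Fin d, mu i * z.1 i := by
          rw [Finset.mul_sum]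
          exact Finset.sum_congr rfl fun i _ => by ring
        rw [h4]
        linear_combination lam z * h2
      rw [Finset.sum_congr rfl fun z _ => h1 z, Finset.sum_sub_distrib]
      have e1 : ∑ z : ↥X, -(lam z * c (Sum.inr 0)) = 0 := by
        rw [Finset.sum_neg_distrib, ← Finset.sum_mul, hsum0, zero_mul, neg_zero]
      have e2 : ∑ z : ↥X, ∑ i : Fin d, mu i * (lam z * z.1 i) = 0 := by
        rw [Finset.sum_comm]
        apply Finset.sum_eq_zero
        intro i _
        have e3 : ∑ z : ↥X, mu i * (lam z * z.1 i)
            = mu i * ∑ z : ↥X, lam z * z.1 i := by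
          rw [Finset.mul_sum]
        rw [e3, hw_i i, mul_zero]
      rw [e1, e2, sub_zero]
    have hlam0 : ∀ z : ↥X, lam z = 0 := by
      intro z
      have hterm : ∀ w ∈ Finset.univ, 0 ≤ lam w ^ 2 * F w w.1 :=
        fun w _ => mul_nonneg (sq_nonneg _) (le_of_lt (hFpos w))
      have h0 := (Finset.sum_eq_zero_iff_of_nonneg hterm).1 hsumsq z (Finset.mem_univ z)
      rcases mul_eq_zero.1 h0 with h | h
      · exact (pow_eq_zero_iff two_ne_zero).1 h
      · exact absurd h (ne_of_gt (hFpos z))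
    -- the affine part vanishes
    have haff : ∀ y : EuclideanSpace ℝ (Fin d),
        c (Sum.inr 0) + ∑ i : Fin d, mu i * y i = 0 := by
      intro y
      have h0 := hS y
      have : ∑ x : ↥X, lam x * F x y = 0 :=
        Finset.sum_eq_zero fun x _ => by rw [hlam0 x, zero_mul]
      rw [this, zero_add] at h0
      exact h0
    have hmu0 : c (Sum.inr 0) = 0 := by
      have h0 := haff 0
      simpa using h0
    have hmui : ∀ i : Fin d, mu i = 0 := by
      intro i
      have h0 := haff (EuclideanSpace.single i 1)
      rw [hmu0, zero_add] at h0
      rw [Finset.sum_eq_single i (fun j _ hji => by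
        rw [EuclideanSpace.single_apply]
        simp [hji]) (fun h => absurd (Finset.mem_univ i) h)] at h0
      simpa [EuclideanSpace.single_apply] using h0
    rintro (x | j)
    · exact hlam0 x
    · refine Fin.cases ?_ ?_ j
      · exact hmu0
      · exact hmui
  -- Step C : the spanning monomials
  set G : (Unit ⊕ Fin d ⊕ Sym2 (Fin d) ⊕ Fin d ⊕ Unit) → (EuclideanSpace ℝ (Fin d) → ℝ) :=
    fun i => Sum.elim (fun _ y => (‖y‖ ^ 2) ^ 2)
      (Sum.elim (fun i y => ‖y‖ ^ 2 * y i)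
        (Sum.elim (Sym2.lift ⟨fun i j y => y i * y j, fun i j => by funext y; ring⟩)
          (Sum.elim (fun i y => y i) (fun _ _ => 1)))) i with hG
  set W := Submodule.span ℝ (Set.range G) with hWdef
  have hmem_sq : ∀ i j : Fin d,
      (fun y : EuclideanSpace ℝ (Fin d) => y i * y j) ∈ W :=
    fun i j => Submodule.subset_span
      ⟨Sum.inr (Sum.inr (Sum.inl s(i, j))), by simp [hG, Sym2.lift_mk]⟩
  have hmem_coord : ∀ i : Fin d, (fun y : EuclideanSpace ℝ (Fin d) => y i) ∈ W :=
    fun i => Submodule.subset_span ⟨Sum.inr (Sum.inr (Sum.inr (Sum.inl i))), rfl⟩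
  have hmem_one : (fun _ : EuclideanSpace ℝ (Fin d) => (1 : ℝ)) ∈ W :=
    Submodule.subset_span ⟨Sum.inr (Sum.inr (Sum.inr (Sum.inr ()))), rfl⟩
  have hmem_q : (fun y : EuclideanSpace ℝ (Fin d) => (‖y‖ ^ 2) ^ 2) ∈ W :=
    Submodule.subset_span ⟨Sum.inl (), rfl⟩
  have hmem_ti : ∀ i : Fin d, (fun y : EuclideanSpace ℝ (Fin d) => ‖y‖ ^ 2 * y i) ∈ W :=
    fun i => Submodule.subset_span ⟨Sum.inr (Sum.inl i), rfl⟩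
  have hnorm_exp : ∀ y : EuclideanSpace ℝ (Fin d), ‖y‖ ^ 2 = ∑ i : Fin d, y i * y i := by
    intro y
    rw [← real_inner_self_eq_norm_sq, PiLp.inner_apply]
    simp [RCLike.inner_apply, conj_trivial]
    exact Finset.sum_congr rfl fun i _ => by ring
  have hinner_exp : ∀ x y : EuclideanSpace ℝ (Fin d),
      (inner ℝ x y : ℝ) = ∑ i : Fin d, x i * y i := by
    intro x y
    rw [PiLp.inner_apply]
    simp [RCLike.inner_apply, conj_trivial]
    exact Finset.sum_congr rfl fun i _ => by ring
  have hmem_t : (fun y : EuclideanSpace ℝ (Fin d) => ‖y‖ ^ 2) ∈ W := by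
    have he : (fun y : EuclideanSpace ℝ (Fin d) => ‖y‖ ^ 2)
        = ∑ i : Fin d, fun y : EuclideanSpace ℝ (Fin d) => y i * y i := by
      funext y
      rw [Finset.sum_apply, hnorm_exp y]
    rw [he]
    exact Submodule.sum_mem _ fun i _ => hmem_sq i i
  have hmem_inner : ∀ x : EuclideanSpace ℝ (Fin d),
      (fun y : EuclideanSpace ℝ (Fin d) => (inner ℝ x y : ℝ)) ∈ W := by
    intro x
    have he : (fun y : EuclideanSpace ℝ (Fin d) => (inner ℝ x y : ℝ))
        = ∑ i : Fin d, x i • fun y : EuclideanSpace ℝ (Fin d) => y i := by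
      funext y
      rw [Finset.sum_apply, hinner_exp x y]
      simp [smul_eq_mul]
    rw [he]
    exact Submodule.sum_mem _ fun i _ => Submodule.smul_mem _ _ (hmem_coord i)
  have hmem_innersq : ∀ x : EuclideanSpace ℝ (Fin d),
      (fun y : EuclideanSpace ℝ (Fin d) => (inner ℝ x y : ℝ) * (inner ℝ x y : ℝ)) ∈ W := by
    intro x
    have he : (fun y : EuclideanSpace ℝ (Fin d) => (inner ℝ x y : ℝ) * (inner ℝ x y : ℝ))
        = ∑ i : Fin d, ∑ j : Fin d,
            (x i * x j) • fun y : EuclideanSpace ℝ (Fin d) => y i * y j := by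
      funext y
      rw [Finset.sum_apply]
      simp only [Finset.sum_apply, Pi.smul_apply, smul_eq_mul]
      rw [hinner_exp x y, Finset.sum_mul_sum]
      apply Finset.sum_congr rfl
      intro i _
      apply Finset.sum_congr rfl
      intro j _
      ring
    rw [he]
    exact Submodule.sum_mem _ fun i _ => Submodule.sum_mem _ fun j _ =>
      Submodule.smul_mem _ _ (hmem_sq i j)
  have hmem_tinner : ∀ x : EuclideanSpace ℝ (Fin d),
      (fun y : EuclideanSpace ℝ (Fin d) => ‖y‖ ^ 2 * (inner ℝ x y : ℝ)) ∈ W := by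
    intro x
    have he : (fun y : EuclideanSpace ℝ (Fin d) => ‖y‖ ^ 2 * (inner ℝ x y : ℝ))
        = ∑ i : Fin d, x i • fun y : EuclideanSpace ℝ (Fin d) => ‖y‖ ^ 2 * y i := by
      funext y
      rw [Finset.sum_apply]
      simp only [Pi.smul_apply, smul_eq_mul]
      rw [hinner_exp x y, Finset.mul_sum]
      apply Finset.sum_congr rfl
      intro i _
      ring
    rw [he]
    exact Submodule.sum_mem _ fun i _ => Submodule.smul_mem _ _ (hmem_ti i)
  have hvmem : ∀ i, v i ∈ W := by
    rintro (x | j)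
    · have hFx : F x = (fun y : EuclideanSpace ℝ (Fin d) => (‖y‖ ^ 2) ^ 2)
          + (-4 : ℝ) • (fun y : EuclideanSpace ℝ (Fin d) => ‖y‖ ^ 2 * (inner ℝ x.1 y : ℝ))
          + (2 * ‖x.1‖ ^ 2 - a x ^ 2 - b x ^ 2) •
              (fun y : EuclideanSpace ℝ (Fin d) => ‖y‖ ^ 2)
          + (4 : ℝ) • (fun y : EuclideanSpace ℝ (Fin d) => (inner ℝ x.1 y : ℝ) * (inner ℝ x.1 y : ℝ))
          + (-(2 * (2 * ‖x.1‖ ^ 2 - a x ^ 2 - b x ^ 2))) •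
              (fun y : EuclideanSpace ℝ (Fin d) => (inner ℝ x.1 y : ℝ))
          + ((‖x.1‖ ^ 2 - a x ^ 2) * (‖x.1‖ ^ 2 - b x ^ 2)) •
              (fun _ : EuclideanSpace ℝ (Fin d) => (1 : ℝ)) := by
        funext y
        simp only [Pi.add_apply, Pi.smul_apply, smul_eq_mul]
        show (‖y - x.1‖ ^ 2 - a x ^ 2) * (‖y - x.1‖ ^ 2 - b x ^ 2) = _
        rw [norm_sub_sq_real, real_inner_comm y x.1]
        ring
      show F x ∈ W
      rw [hFx]
      exact Submodule.add_mem _ (Submodule.add_mem _ (Submodule.add_mem _ (Submodule.add_mem _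
        (Submodule.add_mem _ hmem_q (Submodule.smul_mem _ _ (hmem_tinner x.1)))
        (Submodule.smul_mem _ _ hmem_t)) (Submodule.smul_mem _ _ (hmem_innersq x.1)))
        (Submodule.smul_mem _ _ (hmem_inner x.1))) (Submodule.smul_mem _ _ hmem_one)
    · refine Fin.cases ?_ ?_ j
      · simpa [hv] using hmem_one
      · intro i
        simpa [hv] using hmem_coord i
  -- dimension count
  have hcard1 : Fintype.card (↥X ⊕ Fin (d + 1))
      ≤ Fintype.card (Unit ⊕ Fin d ⊕ Sym2 (Fin d) ⊕ Fin d ⊕ Unit) := by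
    let v' : (↥X ⊕ Fin (d + 1)) → W := fun i => ⟨v i, hvmem i⟩
    have hind' : LinearIndependent ℝ v' := by
      apply LinearIndependent.of_comp W.subtype
      exact hind
    have hfd : FiniteDimensional ℝ W := FiniteDimensional.span_of_finite ℝ (Set.finite_range G)
    have h1 := hind'.fintype_card_le_finrank
    have h2 : Module.finrank ℝ W ≤ Fintype.card (Unit ⊕ Fin d ⊕ Sym2 (Fin d) ⊕ Fin d ⊕ Unit) :=
      finrank_range_le_card G
    exact h1.trans h2
  simp only [Fintype.card_sum, Fintype.card_coe, Fintype.card_fin, Fintype.card_unit,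
    Sym2.card] at hcard1
  have hps : (d + 2).choose 2 = (d + 1).choose 1 + (d + 1).choose 2 := Nat.choose_succ_succ (d + 1) 1
  rw [Nat.choose_one_right] at hps
  omega
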